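/- For every critical value c and every a > c, the map θ ↦ F(a; θ, c) is strictly decreasing on ℝ; that is, if θ₁ < θ₂ then F(a; θ₁, c) > F(a; θ₂, c). -/

import Mathlib

/-- The standard normal CDF `Φ(t) = (2π)^{−1/2} ∫_{−∞}^t exp(−s²/2) ds`. -/
noncomputable def Phi (t : ℝ) : ℝ :=
  (Real.sqrt (2 * Real.pi))⁻¹ * ∫ s in Set.Iic t, Real.exp (-(s ^ 2) / 2)

/-- The truncated-normal distribution function
    `F(a; θ, c) := (Φ(a − θ) − Φ(c − θ)) / (1 − Φ(c − θ))`. -/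
noncomputable def F (a θ c : ℝ) : ℝ :=
  (Phi (a - θ) - Phi (c - θ)) / (1 - Phi (c - θ))

open MeasureTheory Set Real

namespace TruncAux

noncomputable def f (s : ℝ) : ℝ := Real.exp (-(s ^ 2) / 2)

lemma hf_cont : Continuous f := by unfold f; continuity

lemma hf_int : Integrable f := by
  have h := integrable_exp_neg_mul_sq (by norm_num : (0:ℝ) < 1/2)
  convert h using 2 with x
  unfold f; ring_nf

lemma hf_pos (s : ℝ) : 0 < f s := Real.exp_pos _

noncomputable def S (t : ℝ) : ℝ := ∫ s in Set.Ioi t, f s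

lemma S_pos (t : ℝ) : 0 < S t := by
  rw [S, MeasureTheory.setIntegral_pos_iff_support_of_nonneg_ae]
  · have h : Function.support f ∩ Set.Ioi t = Set.Ioi t := by
      rw [Set.inter_eq_right]; intro x _; exact (hf_pos x).ne'
    rw [h]; simp [Real.volume_Ioi]
  · filter_upwards with x using (hf_pos x).le
  · exact hf_int.integrableOn

lemma total : (∫ s, f s) = Real.sqrt (2 * Real.pi) := by
  have h := integral_gaussian (1/2 : ℝ)
  rw [show (Real.pi / (1/2 : ℝ)) = 2 * Real.pi by ring] at h
  rw [← h]
  congr 1 with x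
  unfold f; ring_nf

lemma split (t : ℝ) : (∫ s in Set.Iic t, f s) + S t = Real.sqrt (2 * Real.pi) := by
  rw [S, intervalIntegral.integral_Iic_add_Ioi hf_int.integrableOn hf_int.integrableOn, total]

lemma sqrt2pi_pos : 0 < Real.sqrt (2 * Real.pi) :=
  Real.sqrt_pos.mpr (by positivity)

lemma one_sub_Phi (t : ℝ) : 1 - Phi t = (Real.sqrt (2 * Real.pi))⁻¹ * S t := by
  have h := split t
  have hK := sqrt2pi_pos
  set K := Real.sqrt (2 * Real.pi) with hKdef
  rw [Phi]
  show 1 - K⁻¹ * ∫ s in Set.Iic t, f s = K⁻¹ * S t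
  field_simp
  linarith

/-- derivative of S -/
lemma hS_deriv (t : ℝ) : HasDerivAt S (-(f t)) t := by
  have hrepr : ∀ u : ℝ, S u = Real.sqrt (2*Real.pi) - (∫ s in Set.Iic (0:ℝ), f s)
      - ∫ s in (0:ℝ)..u, f s := by
    intro u
    have h1 := split u
    have h2 : (∫ s in Set.Iic u, f s) - (∫ s in Set.Iic (0:ℝ), f s)
        = ∫ s in (0:ℝ)..u, f s :=
      intervalIntegral.integral_Iic_sub_Iic hf_int.integrableOn hf_int.integrableOn
    linarith
  have hd : HasDerivAt (fun u => Real.sqrt (2*Real.pi) - (∫ s in Set.Iic (0:ℝ), f s)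
      - ∫ s in (0:ℝ)..u, f s) (-(f t)) t := by
    have h3 : HasDerivAt (fun u => ∫ s in (0:ℝ)..u, f s) (f t) t :=
      intervalIntegral.integral_hasDerivAt_right hf_int.intervalIntegrable
        (hf_cont.stronglyMeasurableAtFilter _ _) hf_cont.continuousAt
    exact (hasDerivAt_const t (Real.sqrt (2*Real.pi) - (∫ s in Set.Iic (0:ℝ), f s))).sub h3 |>.congr_deriv (by ring)
  exact (Filter.EventuallyEq.hasDerivAt_iff (by filter_upwards with u; rw [hrepr u])).mpr hd

lemma shift (x d : ℝ) : (∫ t in Set.Ioi x, f (t + d)) = S (x + d) := by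
  rw [S]
  have h := (measurePreserving_add_right volume d).setIntegral_preimage_emb
    (MeasurableEquiv.addRight d).measurableEmbedding f (Set.Ioi (x + d))
  have hpre : (fun t : ℝ => t + d) ⁻¹' Set.Ioi (x + d) = Set.Ioi x := by
    ext y; simp
  rw [hpre] at h
  exact h

lemma key_ineq {d : ℝ} (hd : 0 < d) (x : ℝ) : f x * S (x + d) < f (x + d) * S x := by
  have hL : f (x + d) * S x = ∫ t in Set.Ioi x, f (x + d) * f t := by
    rw [S, MeasureTheory.integral_const_mul]
  have hR : f x * S (x + d) = ∫ t in Set.Ioi x, f x * f (t + d) := by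
    rw [← shift x d, MeasureTheory.integral_const_mul]
  rw [hL, hR]
  have hint1 : IntegrableOn (fun t => f (x + d) * f t) (Set.Ioi x) :=
    (hf_int.integrableOn).const_mul _
  have hint2 : IntegrableOn (fun t => f x * f (t + d)) (Set.Ioi x) := by
    exact ((hf_int.comp_add_right d).integrableOn).const_mul _
  have hdiff : 0 < ∫ t in Set.Ioi x, (f (x + d) * f t - f x * f (t + d)) := by
    have hptpos : ∀ t ∈ Set.Ioi x, 0 < f (x + d) * f t - f x * f (t + d) := by
      intro t ht
      have : f x * f (t + d) < f (x + d) * f t := by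
        unfold f
        rw [← Real.exp_add, ← Real.exp_add]
        apply Real.exp_lt_exp.mpr
        have : x < t := ht
        nlinarith [hd, this]
      linarith
    rw [MeasureTheory.setIntegral_pos_iff_support_of_nonneg_ae]
    · have h : Set.Ioi x ⊆ Function.support
          (fun t => f (x + d) * f t - f x * f (t + d)) ∩ Set.Ioi x := by
        intro t ht
        exact ⟨(hptpos t ht).ne', ht⟩
      calc (0:ENNReal) < volume (Set.Ioi x) := by simp [Real.volume_Ioi]
        _ ≤ _ := measure_mono h
    · show ∀ᵐ t ∂(volume.restrict (Set.Ioi x)),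
          0 ≤ f (x + d) * f t - f x * f (t + d)
      rw [MeasureTheory.ae_restrict_iff' measurableSet_Ioi]
      filter_upwards with t ht using (hptpos t ht).le
    · exact hint1.sub hint2
  rw [MeasureTheory.integral_sub hint1 hint2] at hdiff
  linarith

lemma hg_anti {d : ℝ} (hd : 0 < d) : StrictAnti (fun x => S (x + d) / S x) := by
  apply strictAnti_of_deriv_neg
  intro x
  have h1 : HasDerivAt (fun x => S (x + d)) (-(f (x + d))) x := by
    have := (hS_deriv (x + d)).comp x ((hasDerivAt_id x).add_const d)
    rw [mul_one] at this
    exact this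
  have h2 := (h1.div (hS_deriv x) (S_pos x).ne')
  rw [show (fun x => S (x + d) / S x) = (fun x => S (x + d)) / S from rfl, h2.deriv]
  have hk := key_ineq hd x
  have hs := S_pos x
  have : -(f (x + d)) * S x - S (x + d) * -(f x) < 0 := by linarith
  exact div_neg_of_neg_of_pos this (by positivity)

end TruncAux

open TruncAux in
/-- For every critical value `c` and every `a > c`, the map `θ ↦ F(a; θ, c)` is
strictly decreasing on `ℝ`: if `θ₁ < θ₂` then `F(a; θ₁, c) > F(a; θ₂, c)`. -/
theorem stmt_0 (c a : ℝ) (ha : c < a) :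
    ∀ θ₁ θ₂ : ℝ, θ₁ < θ₂ → F a θ₂ c < F a θ₁ c := by
  intro θ₁ θ₂ hθ
  set d := a - c with hdd
  have hd : 0 < d := by linarith
  have hF : ∀ θ : ℝ, F a θ c = 1 - S ((c - θ) + d) / S (c - θ) := by
    intro θ
    have h1 : (1 : ℝ) - Phi (c - θ) = (Real.sqrt (2*Real.pi))⁻¹ * S (c - θ) := one_sub_Phi _
    have h2 : (1 : ℝ) - Phi (a - θ) = (Real.sqrt (2*Real.pi))⁻¹ * S (a - θ) := one_sub_Phi _
    have hsp := sqrt2pi_pos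
    have hca : a - θ = (c - θ) + d := by rw [hdd]; ring
    rw [F]
    rw [show Phi (a - θ) - Phi (c - θ) = (1 - Phi (c - θ)) - (1 - Phi (a - θ)) by ring]
    rw [h1, h2, hca]
    have hs1 := S_pos (c - θ)
    have hs2 := S_pos ((c - θ) + d)
    have hsp' : (Real.sqrt (2*Real.pi))⁻¹ ≠ 0 := by positivity
    set K := (Real.sqrt (2*Real.pi))⁻¹
    field_simp
  rw [hF θ₁, hF θ₂]
  have := hg_anti hd (show c - θ₂ < c - θ₁ by linarith)
  linarith
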